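/- For every integer t ≥ 1, there exist a bidirected tree T and a set R of requests in T such that ω(R,T) = 2t and χ(R,T) = ⌈5t/2⌉, where ω(R,T) and χ(R,T) are the clique number and chromatic number of the interference graph I(R,T). (Such an example is given by the bidirected tree on vertices {a,b,c,d} with edges ab, bc, bd, and R consisting of t copies of each of the requests (a,b), (b,c), (d,b), (b,a) and (c,b,d); its interference graph is the lexicographic product C_5[K_t].) -/

import Mathlib

open SimpleGraph

/-- A request in a bidirected tree `T`: a directed path of length at least 1,
encoded as a path (walk without vertex repetition) in the underlying tree. -/
structure Request {V : Type*} (T : SimpleGraph V) where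
  s : V
  t : V
  toWalk : T.Walk s t
  isPath : toWalk.IsPath
  one_le_length : 1 ≤ toWalk.length

namespace Request

variable {V : Type*} {T : SimpleGraph V}

/-- The second vertex `s_r⁺` of a request. -/
def sPlus (r : Request T) : V := r.toWalk.getVert 1

/-- The penultimate vertex `t_r⁻` of a request. -/
def tMinus (r : Request T) : V := r.toWalk.getVert (r.toWalk.length - 1)

end Request

variable {V : Type*}

/-- `r` interferes on `r'` if the unique path from `s_r` to `t_{r'}` in the tree `T`
has first arc the emission arc of `r` and last arc the reception arc of `r'`. -/
def InterferesOn (T : SimpleGraph V) (r r' : Request T) : Prop :=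
  ∃ p : T.Walk r.s r'.t, p.IsPath ∧ 1 ≤ p.length ∧
    p.getVert 1 = r.sPlus ∧ p.getVert (p.length - 1) = r'.tMinus

/-- Two requests interfere if one of them interferes on the other. -/
def Interfere (T : SimpleGraph V) (r r' : Request T) : Prop :=
  InterferesOn T r r' ∨ InterferesOn T r' r

/-- `x` is an ancestor of `y` in the tree `T` rooted at `z`:
`x` lies on the unique path from `z` to `y`. -/
def Ancestor (T : SimpleGraph V) (z x y : V) : Prop :=
  ∃ p : T.Walk z y, p.IsPath ∧ x ∈ p.support

/-- Two vertices are related if one is an ancestor of the other. -/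
def Related (T : SimpleGraph V) (z x y : V) : Prop :=
  Ancestor T z x y ∨ Ancestor T z y x

/-- A request is converging (w.r.t. root `z`) if all its arcs are directed towards `z`,
i.e. the head of every arc is an ancestor of its tail. -/
def Converging (T : SimpleGraph V) (z : V) (r : Request T) : Prop :=
  ∀ i < r.toWalk.length, Ancestor T z (r.toWalk.getVert (i+1)) (r.toWalk.getVert i)

/-- A request is diverging (w.r.t. root `z`) if all its arcs are directed away from `z`,
i.e. the tail of every arc is an ancestor of its head. -/
def Diverging (T : SimpleGraph V) (z : V) (r : Request T) : Prop :=
  ∀ i < r.toWalk.length, Ancestor T z (r.toWalk.getVert i) (r.toWalk.getVert (i+1))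

/-- A request is unimodal (w.r.t. root `z`) if it is neither converging nor diverging. -/
def Unimodal (T : SimpleGraph V) (z : V) (r : Request T) : Prop :=
  ¬ Converging T z r ∧ ¬ Diverging T z r

/-- `m` is the middle of the request `r` (w.r.t. root `z`): the vertex of `r`
closest to the root, i.e. the vertex of `r` which is an ancestor of every vertex of `r`. -/
def IsMiddle (T : SimpleGraph V) (z : V) (r : Request T) (m : V) : Prop :=
  m ∈ r.toWalk.support ∧ ∀ y ∈ r.toWalk.support, Ancestor T z m y

/-- The interference graph of a family of requests: two (indices of) requests are
adjacent iff they are distinct and the requests interfere. -/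
def interferenceGraph (T : SimpleGraph V) {ι : Type*} (f : ι → Request T) :
    SimpleGraph ι where
  Adj i j := i ≠ j ∧ Interfere T (f i) (f j)
  symm := by
    constructor
    intro i j h
    exact ⟨h.1.symm, h.2.symm⟩
  loopless := by
    constructor
    intro i h
    exact h.1 rfl

/-- The interference graph of a set of requests. -/
def interGraph (T : SimpleGraph V) (R : Set (Request T)) : SimpleGraph ↥R :=
  interferenceGraph T (fun r => (r : Request T))

/-- The pair `(a, b)` is an arc joining two consecutive vertices of the
bidirected path corresponding to the walk `p` (in either direction). -/
def ArcOn (T : SimpleGraph V) {u v : V} (p : T.Walk u v) (a b : V) : Prop :=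
  ∃ j < p.length, (p.getVert j = a ∧ p.getVert (j+1) = b) ∨
    (p.getVert j = b ∧ p.getVert (j+1) = a)

/-- The request `r` shares an arc with the bidirected path corresponding to
the walk `p`. -/
def SharesArc (T : SimpleGraph V) {u v : V} (p : T.Walk u v) (r : Request T) : Prop :=
  ∃ i < r.toWalk.length, ArcOn T p (r.toWalk.getVert i) (r.toWalk.getVert (i+1))

/-- A leaf of a tree: a vertex with at most one neighbour. -/
def IsLeaf (T : SimpleGraph V) (y : V) : Prop :=
  {w | T.Adj y w}.Subsingleton

/-- A comparability graph: there is a partial order on the vertices such that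
two distinct vertices are adjacent iff they are comparable. -/
def IsComparabilityGraph {α : Type*} (G : SimpleGraph α) : Prop :=
  ∃ le : α → α → Prop, IsPartialOrder α le ∧ ∀ a b, G.Adj a b ↔ a ≠ b ∧ (le a b ∨ le b a)

/-- A cobipartite graph: the vertex set can be partitioned into two cliques. -/
def IsCobipartite {α : Type*} (G : SimpleGraph α) : Prop :=
  ∃ A : Set α, G.IsClique A ∧ G.IsClique Aᶜ


section MyProof


def S : SimpleGraph (Fin 4) where
  Adj x y := (x = 1 ∧ y ≠ 1) ∨ (y = 1 ∧ x ≠ 1)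
  symm := by tauto
  loopless := by constructor; tauto

instance : DecidableRel S.Adj := fun x y =>
  inferInstanceAs (Decidable ((x = 1 ∧ y ≠ 1) ∨ (y = 1 ∧ x ≠ 1)))

def cp : (u v : Fin 4) → S.Walk u v
  | 0, 0 => .nil
  | 0, 1 => .cons (by decide) .nil
  | 0, 2 => .cons (v := 1) (by decide) (.cons (by decide) .nil)
  | 0, 3 => .cons (v := 1) (by decide) (.cons (by decide) .nil)
  | 1, 0 => .cons (by decide) .nil
  | 1, 1 => .nil
  | 1, 2 => .cons (by decide) .nil
  | 1, 3 => .cons (by decide) .nil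
  | 2, 0 => .cons (v := 1) (by decide) (.cons (by decide) .nil)
  | 2, 1 => .cons (by decide) .nil
  | 2, 2 => .nil
  | 2, 3 => .cons (v := 1) (by decide) (.cons (by decide) .nil)
  | 3, 0 => .cons (v := 1) (by decide) (.cons (by decide) .nil)
  | 3, 1 => .cons (by decide) .nil
  | 3, 2 => .cons (v := 1) (by decide) (.cons (by decide) .nil)
  | 3, 3 => .nil

lemma cp_isPath (u v : Fin 4) : (cp u v).IsPath := by
  fin_cases u <;> fin_cases v <;>
    simp [cp, Walk.isPath_def, Walk.support_cons, Walk.support_nil]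

lemma cp_unique : ∀ {u v : Fin 4} (p : S.Walk u v), p.IsPath → p = cp u v := by
  intro u v p hp
  induction p with
  | @nil x => fin_cases x <;> rfl
  | @cons u w v h q ih =>
    rw [Walk.cons_isPath_iff] at hp
    obtain ⟨hq, hu⟩ := hp
    rw [ih hq] at hu ⊢
    fin_cases u <;> fin_cases w <;> fin_cases v <;>
      first
        | rfl
        | exact absurd h (by decide)
        | (exfalso; apply hu; simp [cp, Walk.support_cons, Walk.support_nil])

lemma S_isTree : S.IsTree := by
  rw [isTree_iff_existsUnique_path]
  exact ⟨⟨0⟩, fun v w => ⟨cp v w, cp_isPath v w, fun p hp => cp_unique p hp⟩⟩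

lemma interferesOn_iff (r r' : Request S) :
    InterferesOn S r r' ↔ (1 ≤ (cp r.s r'.t).length ∧
      (cp r.s r'.t).getVert 1 = r.sPlus ∧
      (cp r.s r'.t).getVert ((cp r.s r'.t).length - 1) = r'.tMinus) := by
  constructor
  · rintro ⟨p, hp, h1, h2, h3⟩
    rw [cp_unique p hp] at h1 h2 h3
    exact ⟨h1, h2, h3⟩
  · rintro ⟨h1, h2, h3⟩
    exact ⟨cp r.s r'.t, cp_isPath _ _, h1, h2, h3⟩

def req : Fin 5 → Request S
  | 0 => ⟨0, 1, cp 0 1, cp_isPath 0 1, by simp [cp]⟩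
  | 1 => ⟨1, 2, cp 1 2, cp_isPath 1 2, by simp [cp]⟩
  | 2 => ⟨3, 1, cp 3 1, cp_isPath 3 1, by simp [cp]⟩
  | 3 => ⟨1, 0, cp 1 0, cp_isPath 1 0, by simp [cp]⟩
  | 4 => ⟨2, 3, cp 2 3, cp_isPath 2 3, by simp [cp]⟩

lemma interfere_iff (i j : Fin 5) :
    Interfere S (req i) (req j) ↔ (j = i ∨ j = i + 1 ∨ i = j + 1) := by
  rw [Interfere, interferesOn_iff, interferesOn_iff]
  fin_cases i <;> fin_cases j <;>
    simp [req, cp, Request.sPlus, Request.tMinus, Walk.getVert, Walk.length_cons, Walk.length_nil]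

def b0' : Fin 5 → ℕ := ![0, 2, 0, 3, 1]
def b1' : Fin 5 → ℕ := ![4, 3, 1, 4, 2]
def b3' : Fin 5 → ℕ := ![0, 1, 0, 1, 2]

def colFun (t : ℕ) (i : Fin 5) (k : ℕ) : ℕ :=
  5 * (k / 2) + (if k % 2 = 1 then b1' i else if k + 1 = t then b3' i else b0' i)

lemma base_bounds (i : Fin 5) : b0' i ≤ 3 ∧ b1' i ≤ 4 ∧ b3' i ≤ 2 := by
  fin_cases i <;> simp [b0', b1', b3']

lemma colFun_lt (t : ℕ) (i : Fin 5) (k : ℕ) (hk : k < t) :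
    colFun t i k < (5 * t + 1) / 2 := by
  obtain ⟨h0, h1, h3⟩ := base_bounds i
  unfold colFun
  split_ifs with h h' <;> omega

lemma pat_tables :
    (∀ i j : Fin 5, (j = i ∨ j = i + 1 ∨ i = j + 1) → i ≠ j → b0' i ≠ b0' j) ∧
    (∀ i j : Fin 5, (j = i ∨ j = i + 1 ∨ i = j + 1) → i ≠ j → b1' i ≠ b1' j) ∧
    (∀ i j : Fin 5, (j = i ∨ j = i + 1 ∨ i = j + 1) → i ≠ j → b3' i ≠ b3' j) ∧
    (∀ i j : Fin 5, (j = i ∨ j = i + 1 ∨ i = j + 1) → b0' i ≠ b1' j) ∧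
    (∀ i j : Fin 5, (j = i ∨ j = i + 1 ∨ i = j + 1) → b0' j ≠ b1' i) := by
  decide

lemma colFun_ne (t : ℕ) (i j : Fin 5) (k l : ℕ) (hk : k < t) (hl : l < t)
    (hpat : j = i ∨ j = i + 1 ∨ i = j + 1) (hne : ¬(i = j ∧ k = l)) :
    colFun t i k ≠ colFun t j l := by
  intro he
  obtain ⟨hb0i, hb1i, hb3i⟩ := base_bounds i
  obtain ⟨hb0j, hb1j, hb3j⟩ := base_bounds j
  obtain ⟨T0, T1, T3, T01, T01'⟩ := pat_tables
  unfold colFun at he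
  have hq : k / 2 = l / 2 := by split_ifs at he <;> omega
  by_cases hkl : k = l
  · subst hkl
    have hij : i ≠ j := fun h => hne ⟨h, rfl⟩
    split_ifs at he with h h'
    · exact T1 i j hpat hij (by omega)
    · exact T3 i j hpat hij (by omega)
    · exact T0 i j hpat hij (by omega)
  · by_cases hk2 : k % 2 = 1
    ·
      have hl2 : l % 2 = 0 := by omega
      have hlk : k = l + 1 := by omega
      have hlt : l + 1 ≠ t := by omega
      rw [if_pos hk2, if_neg (by omega : ¬ l % 2 = 1), if_neg hlt] at he
      exact T01' i j hpat (by omega)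
    · have hl2 : l % 2 = 1 := by omega
      have hlk : l = k + 1 := by omega
      have hkt : k + 1 ≠ t := by omega
      rw [if_neg hk2, if_neg hkt, if_pos hl2] at he
      exact T01 i j hpat (by omega)

end MyProof

open SimpleGraph in
/-- For every `t ≥ 1` there are a bidirected tree `T` and a (multi)set `R` of
requests in `T`, indexed by a finite type, with `ω(R,T) = 2t` and
`χ(R,T) = ⌈5t/2⌉`. -/
theorem exists_omega_two_t_chi_ceil_five_t_half (t : ℕ) (ht : 1 ≤ t) :
    ∃ (V : Type) (T : SimpleGraph V) (ι : Type) (_ : Fintype ι)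
      (f : ι → Request T),
      T.IsTree ∧
      (interferenceGraph T f).cliqueNum = 2 * t ∧
      (interferenceGraph T f).chromaticNumber = ((5 * t + 1) / 2 : ℕ) := by
  classical
  refine ⟨Fin 4, S, Fin 5 × Fin t, inferInstance, fun p => req p.1, S_isTree, ?_, ?_⟩
  case _ =>
    -- clique number
    set G := interferenceGraph S (fun p : Fin 5 × Fin t => req p.1) with hG
    have hAdj : ∀ p q : Fin 5 × Fin t, G.Adj p q ↔
        p ≠ q ∧ (q.1 = p.1 ∨ q.1 = p.1 + 1 ∨ p.1 = q.1 + 1) := by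
      intro p q
      show (p ≠ q ∧ Interfere S (req p.1) (req q.1)) ↔ _
      exact and_congr_right fun _ => interfere_iff p.1 q.1
    apply le_antisymm
    · obtain ⟨s, hs⟩ := SimpleGraph.exists_isNClique_cliqueNum (G := G)
      rw [← hs.card_eq]
      have key : ∀ A : Finset (Fin 5),
          (∀ i ∈ A, ∀ j ∈ A, (j = i ∨ j = i + 1 ∨ i = j + 1)) → A.card ≤ 2 := by decide
      have himg : (s.image Prod.fst).card ≤ 2 := by
        apply key
        intro i hi j hj
        obtain ⟨x, hx, rfl⟩ := Finset.mem_image.mp hi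
        obtain ⟨y, hy, rfl⟩ := Finset.mem_image.mp hj
        by_cases hxy : x = y
        · subst hxy; exact Or.inl rfl
        · exact ((hAdj x y).mp (hs.isClique hx hy hxy)).2
      calc s.card ≤ ((s.image Prod.fst) ×ˢ (Finset.univ : Finset (Fin t))).card := by
            apply Finset.card_le_card
            intro x hx
            exact Finset.mem_product.mpr ⟨Finset.mem_image_of_mem _ hx, Finset.mem_univ _⟩
        _ = (s.image Prod.fst).card * t := by
            rw [Finset.card_product, Finset.card_univ, Fintype.card_fin]
        _ ≤ 2 * t := Nat.mul_le_mul_right _ himg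
    · have hcl : G.IsClique ((({0, 1} : Finset (Fin 5)) ×ˢ (Finset.univ : Finset (Fin t))) :
          Finset (Fin 5 × Fin t)) := by
        intro x hx y hy hxy
        rw [Finset.coe_product, Set.mem_prod] at hx hy
        refine (hAdj x y).mpr ⟨hxy, ?_⟩
        have h1 : x.1 = 0 ∨ x.1 = 1 := by simpa using hx.1
        have h2 : y.1 = 0 ∨ y.1 = 1 := by simpa using hy.1
        rcases h1 with h1 | h1 <;> rcases h2 with h2 | h2 <;> rw [h1, h2] <;> decide
      have hcard : ((({0, 1} : Finset (Fin 5)) ×ˢ (Finset.univ : Finset (Fin t)))).card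
          = 2 * t := by
        rw [Finset.card_product, Finset.card_univ, Fintype.card_fin]
        norm_num
      calc 2 * t = _ := hcard.symm
        _ ≤ G.cliqueNum := hcl.card_le_cliqueNum
  case _ =>
    -- chromatic number
    set G := interferenceGraph S (fun p : Fin 5 × Fin t => req p.1) with hG
    have hAdj : ∀ p q : Fin 5 × Fin t, G.Adj p q ↔
        p ≠ q ∧ (q.1 = p.1 ∨ q.1 = p.1 + 1 ∨ p.1 = q.1 + 1) := by
      intro p q
      show (p ≠ q ∧ Interfere S (req p.1) (req q.1)) ↔ _
      exact and_congr_right fun _ => interfere_iff p.1 q.1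
    have hcolorable : G.Colorable ((5 * t + 1) / 2) := by
      refine ⟨Coloring.mk
        (fun x => ⟨colFun t x.1 x.2, colFun_lt t x.1 x.2 x.2.isLt⟩) ?_⟩
      intro x y hadj
      obtain ⟨hne, hpat⟩ := (hAdj x y).mp hadj
      have hne' : ¬((x.1 : Fin 5) = y.1 ∧ (x.2 : ℕ) = (y.2 : ℕ)) := by
        rintro ⟨h1, h2⟩
        exact hne (Prod.ext h1 (Fin.ext h2))
      simpa [Fin.ext_iff] using colFun_ne t x.1 y.1 x.2 y.2 x.2.isLt y.2.isLt hpat hne'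
    have hlow : ∀ n : ℕ, G.Colorable n → (5 * t + 1) / 2 ≤ n := by
      intro n hc
      obtain ⟨C⟩ := hc
      have trip : ∀ i j k : Fin 5, i ≠ j → i ≠ k → j ≠ k →
          ((j = i ∨ j = i + 1 ∨ i = j + 1) ∨ (k = j ∨ k = j + 1 ∨ j = k + 1) ∨
            (k = i ∨ k = i + 1 ∨ i = k + 1)) := by decide
      have fiber : ∀ a : Fin n,
          ((Finset.univ : Finset (Fin 5 × Fin t)).filter fun x => C x = a).card ≤ 2 := by
        intro a
        by_contra hgt
        push_neg at hgt
        obtain ⟨x, y, z, hx, hy, hz, hxy, hxz, hyz⟩ := Finset.two_lt_card_iff.mp hgt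
        rw [Finset.mem_filter] at hx hy hz
        have nadj : ∀ u v : Fin 5 × Fin t, C u = a → C v = a → ¬ G.Adj u v := by
          intro u v hu hv h
          exact C.valid h (hu.trans hv.symm)
        have nxy := nadj x y hx.2 hy.2
        have nxz := nadj x z hx.2 hz.2
        have nyz := nadj y z hy.2 hz.2
        have hfst : ∀ u v : Fin 5 × Fin t, u ≠ v → ¬ G.Adj u v → u.1 ≠ v.1 := by
          intro u v huv h hfst
          exact h ((hAdj u v).mpr ⟨huv, Or.inl hfst.symm⟩)
        have h1 := hfst x y hxy nxy
        have h2 := hfst x z hxz nxz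
        have h3 := hfst y z hyz nyz
        rcases trip x.1 y.1 z.1 h1 h2 h3 with hp | hp | hp
        · exact nxy ((hAdj x y).mpr ⟨hxy, hp⟩)
        · exact nyz ((hAdj y z).mpr ⟨hyz, hp⟩)
        · exact nxz ((hAdj x z).mpr ⟨hxz, hp⟩)
      have hcount := Finset.card_le_mul_card_image (f := fun x : Fin 5 × Fin t => C x)
        Finset.univ 2 (fun a _ => fiber a)
      have h5t : (Finset.univ : Finset (Fin 5 × Fin t)).card = 5 * t := by
        rw [Finset.card_univ]; simp [Fintype.card_prod]
      have himg : ((Finset.univ : Finset (Fin 5 × Fin t)).image fun x => C x).card ≤ n := by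
        calc _ ≤ (Finset.univ : Finset (Fin n)).card := Finset.card_le_card (by simp)
          _ = n := by simp
      omega
    rw [hcolorable.chromaticNumber_eq_sInf]
    norm_cast
    exact le_antisymm (Nat.sInf_le hcolorable) (le_csInf ⟨_, hcolorable⟩ hlow)
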